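/- arXiv:2001.07213 — 3 statements merged into one kernel-verified Lean document; each statement's English description precedes it below -/
import Mathlib

section
/- Let D be a positive fundamental discriminant with D ≡ 0 (mod 4), and set d = D/4. Then there exists exactly one squarefree integer a > 1 such that a divides D and the equation x² − d·y² = a is solvable in integers x and y. -/
open Pell Zsqrtd

section Helpers

/-- divisibility from pointwise factorization bounds at primes -/
lemma hle_aux {m n : ℕ} (hm : m ≠ 0) (hn : n ≠ 0)
    (h : ∀ p, p.Prime → m.factorization p ≤ n.factorization p) : m ∣ n := by
  rw [← Nat.factorization_le_iff_dvd hm hn, Finsupp.le_def]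
  intro p
  by_cases hp : p.Prime
  · exact h p hp
  · simp [Nat.factorization_eq_zero_of_not_prime _ hp]

lemma sqfree_eq_one_of_isSquare {a : ℕ} (ha : Squarefree a) (h : IsSquare a) : a = 1 := by
  obtain ⟨r, rfl⟩ := h
  have hr : IsUnit r := ha r dvd_rfl
  rw [Nat.isUnit_iff.mp hr]

lemma eq_of_sqfree_mul_isSquare {a b : ℕ} (ha : Squarefree a) (hb : Squarefree b)
    (h : IsSquare (a * b)) : a = b := by
  obtain ⟨u, hu⟩ := h
  have h1 : a ∣ u := by
    refine (ha.dvd_pow_iff_dvd (two_ne_zero)).mp ?_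
    exact ⟨b, by rw [sq, ← hu]⟩
  obtain ⟨t, rfl⟩ := h1
  have ha0 : a ≠ 0 := ha.ne_zero
  have hb' : b = a * t ^ 2 := by
    have : a * b = a * (a * t ^ 2) := by rw [hu]; ring
    exact Nat.eq_of_mul_eq_mul_left (Nat.pos_of_ne_zero ha0) this
  have ht : IsUnit t := hb t (by rw [hb']; exact ⟨a, by ring⟩)
  rw [hb', Nat.isUnit_iff.mp ht]; ring

lemma not_isSquare_of_mod_four {n : ℕ} (h : n % 4 = 2 ∨ n % 4 = 3) : ¬IsSquare ((n : ℕ) : ℤ) := by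
  rintro ⟨r, hr⟩
  have h4 : ((n : ℤ)) % 4 = 2 ∨ ((n : ℤ)) % 4 = 3 := by
    rcases h with h | h <;> [left; right] <;> exact_mod_cast congrArg (Nat.cast : ℕ → ℤ) h
  have hrm := Int.emod_emod_of_dvd r (by norm_num : (4:ℤ) ∣ 4)
  have hmul : (r * r) % 4 = ((r % 4) * (r % 4)) % 4 := by
    rw [Int.mul_emod]
  have : r % 4 = 0 ∨ r % 4 = 1 ∨ r % 4 = 2 ∨ r % 4 = 3 := by omega
  rw [hr] at h4
  rcases this with h' | h' | h' | h' <;> rw [h'] at hmul <;> norm_num at hmul <;> omega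

end Helpers

section KeyA

lemma keyA {d X Y a s : ℕ} (hd : Squarefree d) (hX : 2 ≤ X) (hY : 0 < Y)
    (hPell : d * Y ^ 2 = (X + 1) * (X - 1)) (hn : s ^ 2 * a = 2 * (X + 1)) (ha : Squarefree a) :
    s ∣ X + 1 ∧ s ∣ Y ∧ a ∣ 2 * d := by
  have hd0 : d ≠ 0 := hd.ne_zero
  have ha0 : a ≠ 0 := ha.ne_zero
  have hP0 : X + 1 ≠ 0 := by omega
  have hM0 : X - 1 ≠ 0 := by omega
  have hY0 : Y ≠ 0 := hY.ne'
  have hs0 : s ≠ 0 := by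
    rintro rfl
    rw [zero_pow two_ne_zero, zero_mul] at hn
    omega
  have key : ∀ p : ℕ, p.Prime →
      s.factorization p ≤ (X + 1).factorization p ∧ s.factorization p ≤ Y.factorization p ∧
      a.factorization p ≤ (2 * d).factorization p := by
    intro p hp
    have e1 : 2 * s.factorization p + a.factorization p
        = (2 : ℕ).factorization p + (X + 1).factorization p := by
      have h1 : (s ^ 2 * a).factorization = (2 * (X + 1)).factorization := by rw [hn]
      have h2 := DFunLike.congr_fun h1 p
      rwa [Nat.factorization_mul (pow_ne_zero _ hs0) ha0, Nat.factorization_pow,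
        Nat.factorization_mul two_ne_zero hP0, Finsupp.add_apply, Finsupp.add_apply,
        Finsupp.smul_apply, smul_eq_mul] at h2
    have e2 : d.factorization p + 2 * Y.factorization p
        = (X + 1).factorization p + (X - 1).factorization p := by
      have h1 : (d * Y ^ 2).factorization = ((X + 1) * (X - 1)).factorization := by rw [hPell]
      have h2 := DFunLike.congr_fun h1 p
      rwa [Nat.factorization_mul hd0 (pow_ne_zero _ hY0), Nat.factorization_pow,
        Nat.factorization_mul hP0 hM0, Finsupp.add_apply, Finsupp.add_apply,
        Finsupp.smul_apply, smul_eq_mul] at h2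
    have hA1 : a.factorization p ≤ 1 := ha.natFactorization_le_one p
    have hD1 : d.factorization p ≤ 1 := hd.natFactorization_le_one p
    have e2d : (2 * d).factorization p = (2 : ℕ).factorization p + d.factorization p := by
      rw [Nat.factorization_mul two_ne_zero hd0, Finsupp.add_apply]
    rcases eq_or_ne p 2 with rfl | hp2
    · have k2 : (2 : ℕ).factorization 2 = 1 := by
        rw [Nat.Prime.factorization Nat.prime_two, Finsupp.single_apply, if_pos rfl]
      rcases Nat.eq_zero_or_pos ((X + 1).factorization 2) with hz | hz
      · rw [e2d]; omega
      · have h1 : (2 : ℕ) ∣ X + 1 :=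
          (Nat.Prime.dvd_iff_one_le_factorization Nat.prime_two hP0).mpr hz
        have h2 : (2 : ℕ) ∣ X - 1 := by omega
        have hM : 1 ≤ (X - 1).factorization 2 :=
          (Nat.Prime.dvd_iff_one_le_factorization Nat.prime_two hM0).mp h2
        rw [e2d]; omega
    · have k2 : (2 : ℕ).factorization p = 0 := by
        rw [Nat.Prime.factorization Nat.prime_two, Finsupp.single_apply,
          if_neg (fun h => hp2 h.symm)]
      have hco : (X + 1).factorization p = 0 ∨ (X - 1).factorization p = 0 := by
        by_contra hcon
        push_neg at hcon
        have h1 : p ∣ X + 1 := (Nat.Prime.dvd_iff_one_le_factorization hp hP0).mpr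
          (Nat.pos_of_ne_zero hcon.1)
        have h2 : p ∣ X - 1 := (Nat.Prime.dvd_iff_one_le_factorization hp hM0).mpr
          (Nat.pos_of_ne_zero hcon.2)
        have h3 : p ∣ 2 := by
          have := Nat.dvd_sub h1 h2
          rwa [show X + 1 - (X - 1) = 2 by omega] at this
        exact hp2 ((Nat.prime_dvd_prime_iff_eq hp Nat.prime_two).mp h3)
      rw [e2d]
      rcases hco with hco | hco <;> omega
  exact ⟨hle_aux hs0 hP0 fun p hp => (key p hp).1, hle_aux hs0 hY0 fun p hp => (key p hp).2.1,
    hle_aux ha0 (by simp [hd0]) fun p hp => (key p hp).2.2⟩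

lemma dvd_two_mul_of_dvd_four_mul {b d : ℕ} (hd : d ≠ 0) (hb : Squarefree b) (h : b ∣ 4 * d) :
    b ∣ 2 * d := by
  have hb0 : b ≠ 0 := hb.ne_zero
  refine hle_aux hb0 (by simp [hd]) fun p hp => ?_
  have h4 := (Nat.factorization_le_iff_dvd hb0 (by simp [hd])).mpr h p
  have hfour : (4 : ℕ) = 2 ^ 2 := by norm_num
  have e4 : (4 * d).factorization p = 2 * (2 : ℕ).factorization p + d.factorization p := by
    rw [Nat.factorization_mul (by norm_num) hd, Finsupp.add_apply, hfour,
      Nat.factorization_pow, Finsupp.smul_apply, smul_eq_mul]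
  have e2 : (2 * d).factorization p = (2 : ℕ).factorization p + d.factorization p := by
    rw [Nat.factorization_mul two_ne_zero hd, Finsupp.add_apply]
  have hb1 : b.factorization p ≤ 1 := hb.natFactorization_le_one p
  rcases eq_or_ne p 2 with rfl | hp2
  · have k2 : (2 : ℕ).factorization 2 = 1 := by
      rw [Nat.Prime.factorization Nat.prime_two, Finsupp.single_apply, if_pos rfl]
    omega
  · have k2 : (2 : ℕ).factorization p = 0 := by
      rw [Nat.Prime.factorization Nat.prime_two, Finsupp.single_apply,
        if_neg (fun h => hp2 h.symm)]
    omega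

end KeyA

section PellPart

variable {d : ℤ}

lemma sol_coe_mul (a b : Pell.Solution₁ d) : ((a * b : Pell.Solution₁ d) : ℤ√d) = (a : ℤ√d) * (b : ℤ√d) := rfl

lemma sol_coe_one : ((1 : Pell.Solution₁ d) : ℤ√d) = 1 := rfl

lemma sol_norm_coe (a : Pell.Solution₁ d) : ((a : ℤ√d)).norm = 1 :=
  Zsqrtd.norm_eq_one_iff_mem_unitary.mpr a.property

lemma isSquare_of_sq_eq (hd : 0 < d) {δ : ℤ√d} {n : ℕ} (hn : 0 < n)
    (hsq : δ * δ = ((n : ℕ) : ℤ√d)) (hnorm : δ.norm = n) : IsSquare n := by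
  have hre : δ.re * δ.re + d * δ.im * δ.im = n := by
    have h := congrArg Zsqrtd.re hsq
    simpa [Zsqrtd.re_mul] using h
  have him : δ.re * δ.im + δ.im * δ.re = 0 := by
    have h := congrArg Zsqrtd.im hsq
    simpa [Zsqrtd.im_mul] using h
  have h0 : δ.re * δ.im = 0 := by linarith
  rcases mul_eq_zero.mp h0 with h | h
  · exfalso
    rw [Zsqrtd.norm_def, h] at hnorm
    have hn' : (0 : ℤ) < n := by exact_mod_cast hn
    nlinarith [mul_self_nonneg δ.im]
  · refine ⟨δ.re.natAbs, ?_⟩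
    have h2 : δ.re * δ.re = (n : ℤ) := by rw [h] at hre; linarith
    have h3 : (↑(δ.re.natAbs * δ.re.natAbs) : ℤ) = (n : ℤ) := by
      rw [Int.natAbs_mul_self]; exact h2
    exact_mod_cast h3.symm

lemma lemB {a : ℕ} {x y : ℤ} (ha : Squarefree a) (had : (a : ℤ) ∣ 2 * d)
    (h : x ^ 2 - d * y ^ 2 = a) : (a : ℤ) ∣ x ^ 2 + d * y ^ 2 ∧ (a : ℤ) ∣ 2 * (x * y) := by
  constructor
  · have e : x ^ 2 + d * y ^ 2 = a + 2 * d * y ^ 2 := by linear_combination h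
    rw [e]
    exact dvd_add dvd_rfl (Dvd.dvd.mul_right had _)
  · have ha' : Squarefree ((a : ℤ)) := Int.squarefree_natCast.mpr ha
    refine (ha'.dvd_pow_iff_dvd two_ne_zero).mp ?_
    have e : (2 * (x * y)) ^ 2 = (4 * y ^ 2) * (x ^ 2 - d * y ^ 2) + (2 * d) * (2 * y ^ 4) := by
      ring
    rw [e, h]
    exact dvd_add (Dvd.dvd.mul_left dvd_rfl _) (Dvd.dvd.mul_right had _)

/-- Key lemma: any representable squarefree `a > 1` dividing `2d` gives `α` with
`α² = a·ε^k`, `k` odd. -/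
lemma rep_odd {ε : Pell.Solution₁ d} (hε : Pell.IsFundamental ε) {a : ℕ} (ha1 : 1 < a)
    (ha : Squarefree a) (had : (a : ℤ) ∣ 2 * d) {x y : ℤ} (hxy : x ^ 2 - d * y ^ 2 = a) :
    ∃ (α : ℤ√d) (k : ℤ), α * α = ((a : ℕ) : ℤ√d) * ↑(ε ^ k) ∧ α.norm = a ∧ Odd k := by
  have hd : 0 < d := hε.d_pos
  have ha0 : (0 : ℤ) < a := by exact_mod_cast Nat.lt_of_lt_of_le Nat.zero_lt_one ha1.le
  obtain ⟨h1, h2⟩ := lemB ha had hxy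
  obtain ⟨u, hu⟩ := h1
  obtain ⟨v, hv⟩ := h2
  have norm1 : u ^ 2 - d * v ^ 2 = 1 := by
    have e : (x ^ 2 + d * y ^ 2) ^ 2 - d * (2 * (x * y)) ^ 2 = ((a : ℤ)) ^ 2 := by
      linear_combination (x ^ 2 - d * y ^ 2 + (a : ℤ)) * hxy
    rw [hu, hv] at e
    have e2 : (a : ℤ) ^ 2 * (u ^ 2 - d * v ^ 2) = (a : ℤ) ^ 2 * 1 := by linear_combination e
    exact mul_left_cancel₀ (pow_ne_zero 2 ha0.ne') e2
  set β := Pell.Solution₁.mk u v norm1 with hβ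
  have hβx : 0 < β.x := by
    rw [hβ, Pell.Solution₁.x_mk]
    have hupos : (0 : ℤ) < a * u := by
      rw [← hu]
      have : x ^ 2 + d * y ^ 2 = a + 2 * d * y ^ 2 := by linear_combination hxy
      rw [this]
      positivity
    by_contra hc
    push_neg at hc
    nlinarith
  obtain ⟨k, hk | hk⟩ := hε.eq_zpow_or_neg_zpow β
  swap
  · exfalso
    have := Pell.Solution₁.x_zpow_pos hε.x_pos k
    rw [hk, Pell.Solution₁.x_neg] at hβx
    linarith
  set α : ℤ√d := ⟨x, y⟩ with hα
  have hcoe : (↑(ε ^ k) : ℤ√d) = ⟨u, v⟩ := by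
    rw [← hk, hβ, Pell.Solution₁.coe_mk]
  have hαα : α * α = ((a : ℕ) : ℤ√d) * ↑(ε ^ k) := by
    rw [hcoe, hα]
    have hcast : ((a : ℕ) : ℤ√d) = (((a : ℤ)) : ℤ√d) := by push_cast; rfl
    rw [hcast, Zsqrtd.smul_val]
    ext
    · simp [Zsqrtd.re_mul, ← hu]; ring
    · simp [Zsqrtd.im_mul, ← hv]; ring
  have hnormα : α.norm = a := by
    rw [Zsqrtd.norm_def, hα]
    simp only []
    linear_combination hxy
  refine ⟨α, k, hαα, hnormα, ?_⟩
  -- k is odd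
  by_contra hodd
  rw [Int.not_odd_iff_even] at hodd
  obtain ⟨m, hm⟩ := hodd
  set γ : ℤ√d := α * ↑(ε ^ (-m)) with hγ
  have hgrp : ε ^ k * (ε ^ (-m) * ε ^ (-m)) = 1 := by
    rw [← zpow_add, ← zpow_add, show k + (-m + -m) = 0 by omega, zpow_zero]
  have hγγ : γ * γ = ((a : ℕ) : ℤ√d) := by
    have e : γ * γ = (α * α) * ((↑(ε ^ (-m)) : ℤ√d) * ↑(ε ^ (-m))) := by rw [hγ]; ring
    rw [e, hαα, mul_assoc, ← sol_coe_mul, ← sol_coe_mul, hgrp, sol_coe_one, mul_one]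
  have hγnorm : γ.norm = a := by
    rw [hγ, Zsqrtd.norm_mul, hnormα, sol_norm_coe, mul_one]
  have hsq := isSquare_of_sq_eq hd (Nat.lt_of_lt_of_le Nat.zero_lt_one ha1.le) hγγ hγnorm
  have := sqfree_eq_one_of_isSquare ha hsq
  omega

end PellPart

section Unique

variable {d : ℤ}

lemma rep_unique {ε : Pell.Solution₁ d} (hε : Pell.IsFundamental ε)
    {a₁ a₂ : ℕ} (h₁ : 1 < a₁) (h₂ : 1 < a₂) (hs₁ : Squarefree a₁) (hs₂ : Squarefree a₂)
    (hd₁ : (a₁ : ℤ) ∣ 2 * d) (hd₂ : (a₂ : ℤ) ∣ 2 * d)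
    (r₁ : ∃ x y : ℤ, x ^ 2 - d * y ^ 2 = a₁) (r₂ : ∃ x y : ℤ, x ^ 2 - d * y ^ 2 = a₂) :
    a₁ = a₂ := by
  obtain ⟨x₁, y₁, hxy₁⟩ := r₁
  obtain ⟨x₂, y₂, hxy₂⟩ := r₂
  obtain ⟨α₁, k₁, hα₁, hn₁, hodd₁⟩ := rep_odd hε h₁ hs₁ hd₁ hxy₁
  obtain ⟨α₂, k₂, hα₂, hn₂, hodd₂⟩ := rep_odd hε h₂ hs₂ hd₂ hxy₂
  obtain ⟨j, hj⟩ := hodd₁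
  obtain ⟨l, hl⟩ := hodd₂
  set m : ℤ := j + l + 1 with hm
  set γ : ℤ√d := α₁ * α₂ * ↑(ε ^ (-m)) with hγ
  have hgrp : ε ^ k₁ * ε ^ k₂ * (ε ^ (-m) * ε ^ (-m)) = 1 := by
    rw [← zpow_add, ← zpow_add, ← zpow_add, show k₁ + k₂ + (-m + -m) = 0 by omega, zpow_zero]
  have hγγ : γ * γ = (((a₁ * a₂ : ℕ)) : ℤ√d) := by
    have e : γ * γ = ((α₁ * α₁) * (α₂ * α₂)) * ((↑(ε ^ (-m)) : ℤ√d) * ↑(ε ^ (-m))) := by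
      rw [hγ]; ring
    rw [e, hα₁, hα₂]
    have e2 : ((a₁ : ℕ) : ℤ√d) * ↑(ε ^ k₁) * (((a₂ : ℕ) : ℤ√d) * ↑(ε ^ k₂)) *
        ((↑(ε ^ (-m)) : ℤ√d) * ↑(ε ^ (-m)))
        = (((a₁ : ℕ) : ℤ√d) * ((a₂ : ℕ) : ℤ√d)) *
          ((↑(ε ^ k₁) : ℤ√d) * ↑(ε ^ k₂) * ((↑(ε ^ (-m)) : ℤ√d) * ↑(ε ^ (-m)))) := by ring
    rw [e2, ← sol_coe_mul, ← sol_coe_mul, ← sol_coe_mul, hgrp, sol_coe_one, mul_one]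
    push_cast
    ring
  have hγnorm : γ.norm = (a₁ * a₂ : ℕ) := by
    rw [hγ, Zsqrtd.norm_mul, Zsqrtd.norm_mul, hn₁, hn₂, sol_norm_coe, mul_one]
    push_cast
    ring
  have hpos : 0 < a₁ * a₂ := Nat.mul_pos (by omega) (by omega)
  have hsq := isSquare_of_sq_eq hε.d_pos hpos hγγ hγnorm
  exact eq_of_sqfree_mul_isSquare hs₁ hs₂ hsq

end Unique

section Exists

lemma rep_exists {d : ℕ} (hd : Squarefree d) (hmod : d % 4 = 2 ∨ d % 4 = 3) :
    ∃ a : ℕ, 1 < a ∧ Squarefree a ∧ a ∣ 2 * d ∧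
      ∃ x y : ℤ, x ^ 2 - (d : ℤ) * y ^ 2 = a := by
  have hd2 : 2 ≤ d := by omega
  have hdpos : (0 : ℤ) < (d : ℤ) := by exact_mod_cast (by omega : 0 < d)
  have hns : ¬IsSquare ((d : ℕ) : ℤ) := not_isSquare_of_mod_four hmod
  obtain ⟨ε, hε⟩ := Pell.IsFundamental.exists_of_not_isSquare hdpos hns
  have hx1 : 1 < ε.x := hε.1
  have hy1 : 0 < ε.y := hε.2.1
  set X : ℕ := ε.x.toNat with hXdef
  set Y : ℕ := ε.y.toNat with hYdef
  have castX : (X : ℤ) = ε.x := Int.toNat_of_nonneg (by linarith)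
  have castY : (Y : ℤ) = ε.y := Int.toNat_of_nonneg (by linarith)
  have hX : 2 ≤ X := by omega
  have hY : 0 < Y := by omega
  have hPellN : d * Y ^ 2 = (X + 1) * (X - 1) := by
    have h := ε.prop
    have : ((d * Y ^ 2 : ℕ) : ℤ) = (((X + 1) * (X - 1) : ℕ) : ℤ) := by
      push_cast [Nat.cast_sub (by omega : 1 ≤ X)]
      rw [castX, castY]
      linear_combination -h
    exact_mod_cast this
  obtain ⟨a, s, hsa, ha⟩ := Nat.sq_mul_squarefree (2 * (X + 1))
  obtain ⟨hsP, hsY, haD⟩ := keyA hd hX hY hPellN hsa ha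
  have ha0 : a ≠ 0 := ha.ne_zero
  have hs0 : s ≠ 0 := by
    rintro rfl
    rw [zero_pow two_ne_zero, zero_mul] at hsa
    omega
  obtain ⟨x', hx'⟩ := hsP
  obtain ⟨y', hy'⟩ := hsY
  have hrep : ((x' : ℤ)) ^ 2 - (d : ℤ) * (y' : ℤ) ^ 2 = a := by
    have c1 : ((s : ℤ) * x') = ((X : ℤ) + 1) := by exact_mod_cast hx'.symm
    have c2 : ((s : ℤ) * y') = (Y : ℤ) := by exact_mod_cast hy'.symm
    have c3 : ((s : ℤ)) ^ 2 * a = 2 * ((X : ℤ) + 1) := by exact_mod_cast hsa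
    have c4 : (d : ℤ) * (Y : ℤ) ^ 2 = ((X : ℤ) + 1) * ((X : ℤ) - 1) := by
      have := congrArg (Nat.cast : ℕ → ℤ) hPellN
      push_cast [Nat.cast_sub (by omega : 1 ≤ X)] at this
      exact_mod_cast this
    have key : ((s : ℤ)) ^ 2 * (((x' : ℤ)) ^ 2 - (d : ℤ) * (y' : ℤ) ^ 2)
        = ((s : ℤ)) ^ 2 * a := by
      have expand : ((s : ℤ)) ^ 2 * (((x' : ℤ)) ^ 2 - (d : ℤ) * (y' : ℤ) ^ 2)
          = ((s : ℤ) * x') ^ 2 - (d : ℤ) * ((s : ℤ) * y') ^ 2 := by ring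
      rw [expand, c1, c2, c3]
      linear_combination -c4
    have hs0' : ((s : ℤ)) ^ 2 ≠ 0 := pow_ne_zero 2 (by exact_mod_cast hs0)
    exact mul_left_cancel₀ hs0' key
  have ha1 : 1 < a := by
    by_contra hc
    have haeq : a = 1 := by omega
    subst haeq
    -- then we get a smaller Pell solution, contradicting fundamentality
    have hrep1 : ((x' : ℤ)) ^ 2 - (d : ℤ) * (y' : ℤ) ^ 2 = 1 := by
      rw [hrep]; norm_num
    have hy'pos : 0 < y' := by
      rcases Nat.eq_zero_or_pos y' with h | h
      · subst h; omega
      · exact h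
    have hx'2 : (3 : ℤ) ≤ ((x' : ℤ)) ^ 2 := by
      have hyz : (1 : ℤ) ≤ (y' : ℤ) := by exact_mod_cast hy'pos
      have hdz : (2 : ℤ) ≤ (d : ℤ) := by exact_mod_cast hd2
      nlinarith
    have hx'pos : 1 < (x' : ℤ) := by
      have : (0 : ℤ) ≤ (x' : ℤ) := by positivity
      nlinarith
    have hle : ε.x ≤ (Pell.Solution₁.mk (x' : ℤ) (y' : ℤ) hrep1).x :=
      hε.2.2 (by rw [Pell.Solution₁.x_mk]; exact hx'pos)
    rw [Pell.Solution₁.x_mk] at hle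
    -- 2 * x'^2 = X + 1 = ε.x + 1
    have hkey : 2 * ((x' : ℤ)) ^ 2 = ε.x + 1 := by
      have c1 : ((s : ℤ) * x') = ((X : ℤ) + 1) := by exact_mod_cast hx'.symm
      have c3 : ((s : ℤ)) ^ 2 = 2 * ((X : ℤ) + 1) := by
        have h5 : ((s ^ 2 * 1 : ℕ) : ℤ) = ((2 * (X + 1) : ℕ) : ℤ) := by exact_mod_cast hsa
        push_cast at h5
        linarith
      have hP0 : ((X : ℤ) + 1) ≠ 0 := by positivity
      have h6 : ((X : ℤ) + 1) * (2 * ((x' : ℤ)) ^ 2) = ((X : ℤ) + 1) * ((X : ℤ) + 1) := by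
        linear_combination (-(x' : ℤ) ^ 2) * c3 + ((s : ℤ) * (x' : ℤ) + (X : ℤ) + 1) * c1
      have h2 := mul_left_cancel₀ hP0 h6
      rw [h2, castX]
    have hsqle : ε.x * ε.x ≤ (x' : ℤ) * (x' : ℤ) :=
      mul_le_mul hle hle (by linarith) (by positivity)
    nlinarith [hle, hkey, hx1, hsqle]
  exact ⟨a, ha1, ha, haD, (x' : ℤ), (y' : ℤ), hrep⟩

end Exists

/-- if `D` is a positive fundamental discriminant with `D ≡ 0 (mod 4)`
(i.e. `D = 4d` with `d` squarefree and `d ≡ 2` or `3 (mod 4)`), then there is exactly one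
squarefree integer `a > 1` dividing `D` such that `x² - d·y² = a` is solvable over `ℤ`. -/
theorem stmt5 (D : ℕ) (hpos : 0 < D) (h4 : 4 ∣ D) (hsf : Squarefree (D / 4))
    (hmod : D / 4 % 4 = 2 ∨ D / 4 % 4 = 3) :
    ∃! a : ℕ, 1 < a ∧ Squarefree a ∧ a ∣ D ∧
      ∃ x y : ℤ, x ^ 2 - ((D / 4 : ℕ) : ℤ) * y ^ 2 = (a : ℤ) := by
  set d : ℕ := D / 4 with hddef
  have hD : 4 * d = D := Nat.mul_div_cancel' h4
  have hd0 : d ≠ 0 := by omega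
  obtain ⟨a, ha1, hasf, haD, hrep⟩ := rep_exists hsf hmod
  have hdpos : (0 : ℤ) < (d : ℤ) := by exact_mod_cast Nat.pos_of_ne_zero hd0
  obtain ⟨ε, hε⟩ :=
    Pell.IsFundamental.exists_of_not_isSquare hdpos (not_isSquare_of_mod_four hmod)
  refine ⟨a, ⟨ha1, hasf, dvd_trans haD ⟨2, by omega⟩, hrep⟩, ?_⟩
  rintro b ⟨hb1, hbsf, hbD, x, y, hbrep⟩
  have hbD4 : b ∣ 4 * d := by rwa [hD]
  have hbD' : b ∣ 2 * d := dvd_two_mul_of_dvd_four_mul hd0 hbsf hbD4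
  exact rep_unique hε hb1 ha1 hbsf hasf (by exact_mod_cast hbD') (by exact_mod_cast haD)
    ⟨x, y, hbrep⟩ hrep
end

section
/- Let d and a be coprime positive squarefree integers with d·a > 1. Then the equation x² − d·a·y² = −a is solvable in integers x and y if and only if the equation x² − d·a·y² = d is solvable in integers x and y. -/
/-- for coprime positive squarefree integers `d` and `a` with `d·a > 1`,
`x² - d·a·y² = -a` is solvable over `ℤ` iff `x² - d·a·y² = d` is solvable over `ℤ`. -/
theorem stmt6 (d a : ℕ) (hd : 0 < d) (ha : 0 < a) (hcop : Nat.Coprime d a)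
    (hdsf : Squarefree d) (hasf : Squarefree a) (hgt : 1 < d * a) :
    (∃ x y : ℤ, x ^ 2 - (d : ℤ) * (a : ℤ) * y ^ 2 = -(a : ℤ)) ↔
      (∃ x y : ℤ, x ^ 2 - (d : ℤ) * (a : ℤ) * y ^ 2 = (d : ℤ)) := by
  have ha0 : (a : ℤ) ≠ 0 := by exact_mod_cast ha.ne'
  have hd0 : (d : ℤ) ≠ 0 := by exact_mod_cast hd.ne'
  constructor
  · rintro ⟨x, y, h⟩
    have hdvd : (a : ℤ) ∣ x ^ 2 := ⟨(d : ℤ) * y ^ 2 - 1, by linarith⟩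
    have hax : (a : ℤ) ∣ x :=
      ((Int.squarefree_natCast.mpr hasf).dvd_pow_iff_dvd two_ne_zero).mp hdvd
    obtain ⟨x', rfl⟩ := hax
    have key : (d : ℤ) * y ^ 2 - (a : ℤ) * x' ^ 2 = 1 := by
      have := mul_left_cancel₀ ha0 (show (a:ℤ) * ((a:ℤ) * x'^2) = (a:ℤ) * ((d:ℤ)*y^2 - 1) by ring_nf; ring_nf at h; linarith)
      linarith
    refine ⟨(d : ℤ) * y, x', ?_⟩
    have : ((d:ℤ)*y)^2 - (d:ℤ)*(a:ℤ)*x'^2 = (d:ℤ) * ((d:ℤ)*y^2 - (a:ℤ)*x'^2) := by ring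
    rw [this, key, mul_one]
  · rintro ⟨x, y, h⟩
    have hdvd : (d : ℤ) ∣ x ^ 2 := ⟨(a : ℤ) * y ^ 2 + 1, by linarith [h]; ⟩
    have hdx : (d : ℤ) ∣ x :=
      ((Int.squarefree_natCast.mpr hdsf).dvd_pow_iff_dvd two_ne_zero).mp hdvd
    obtain ⟨x', rfl⟩ := hdx
    have key : (d : ℤ) * x' ^ 2 - (a : ℤ) * y ^ 2 = 1 := by
      have := mul_left_cancel₀ hd0 (show (d:ℤ) * ((d:ℤ) * x'^2) = (d:ℤ) * ((a:ℤ)*y^2 + 1) by ring_nf; ring_nf at h; linarith)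
      linarith
    refine ⟨(a : ℤ) * y, x', ?_⟩
    have : ((a:ℤ)*y)^2 - (d:ℤ)*(a:ℤ)*x'^2 = -((a:ℤ) * ((d:ℤ)*x'^2 - (a:ℤ)*y^2)) := by ring
    rw [this, key, mul_one]
end

section
/- Let k ≥ 1, let U₀ be a k-dimensional 𝔽₂-vector subspace of 𝔽₂^{2k}, and let b ∈ 𝔽₂^{2k} with b ∉ U₀. Let W = U₀ + 𝔽₂·b be the (k+1)-dimensional subspace spanned by U₀ and b, and define the map μ from the set of all subsets of the coset b + U₀ to W by μ(S) = Σ_{s ∈ S} s. Then: (i) μ is surjective; (ii) every fiber of μ has cardinality 2^{2^k − k − 1}; (iii) the image under μ of the subsets of b + U₀ of odd cardinality is exactly the coset b + U₀. -/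
open Finset

private lemma fiber_card_aux {R M N : Type*} [CommRing R] [AddCommGroup M] [Module R M]
    [AddCommGroup N] [Module R N] [Finite M] [Finite N]
    (f : M →ₗ[R] N) (hf : Function.Surjective f) (y : N) :
    Nat.card {x // f x = y} * Nat.card N = Nat.card M := by
  obtain ⟨x₀, hx₀⟩ := hf y
  have e : {x // f x = y} ≃ LinearMap.ker f :=
    { toFun := fun x => ⟨x.1 - x₀, by simp [LinearMap.mem_ker, map_sub, x.2, hx₀]⟩
      invFun := fun x => ⟨x.1 + x₀, by
        have hx := x.2
        rw [LinearMap.mem_ker] at hx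
        simp [map_add, hx, hx₀]⟩
      left_inv := fun x => by ext; simp
      right_inv := fun x => by ext; simp }
  rw [Nat.card_congr e]
  have h1 := Submodule.card_eq_card_quotient_mul_card (LinearMap.ker f)
  have h2 : Nat.card (M ⧸ LinearMap.ker f) = Nat.card N :=
    Nat.card_congr (f.quotKerEquivOfSurjective hf).toEquiv
  rw [h1, h2, mul_comm]

/-- let `U₀` be a `k`-dimensional subspace of `𝔽₂^{2k}`, `b ∉ U₀`,
`W = U₀ + 𝔽₂·b`, `C = b + U₀` the coset, and `μ(S) = Σ_{s ∈ S} s` for `S ⊆ C`. Then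
`μ` maps subsets of `C` into `W`, and: (i) `μ` is surjective onto `W`; (ii) each fiber of
`μ` has cardinality `2^{2^k - k - 1}`; (iii) the image under `μ` of the subsets of `C` of
odd cardinality is exactly `C`. -/
theorem stmt13 (k : ℕ) (hk : 1 ≤ k)
    (U₀ : Submodule (ZMod 2) (Fin (2 * k) → ZMod 2))
    (hU₀ : Module.finrank (ZMod 2) U₀ = k)
    (b : Fin (2 * k) → ZMod 2) (hb : b ∉ U₀)
    (W : Submodule (ZMod 2) (Fin (2 * k) → ZMod 2))
    (hW : W = U₀ ⊔ Submodule.span (ZMod 2) {b})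
    (C : Set (Fin (2 * k) → ZMod 2)) (hC : C = {v | ∃ u ∈ U₀, v = b + u}) :
    (∀ S : Finset (Fin (2 * k) → ZMod 2), ↑S ⊆ C → ∑ s ∈ S, s ∈ W) ∧
    (∀ w : Fin (2 * k) → ZMod 2, w ∈ W →
      ∃ S : Finset (Fin (2 * k) → ZMod 2), ↑S ⊆ C ∧ ∑ s ∈ S, s = w) ∧
    (∀ w : Fin (2 * k) → ZMod 2, w ∈ W →
      Nat.card {S : Finset (Fin (2 * k) → ZMod 2) // ↑S ⊆ C ∧ ∑ s ∈ S, s = w} =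
        2 ^ (2 ^ k - k - 1)) ∧
    (∀ v : Fin (2 * k) → ZMod 2,
      (∃ S : Finset (Fin (2 * k) → ZMod 2), ↑S ⊆ C ∧ Odd S.card ∧ ∑ s ∈ S, s = v) ↔
        v ∈ C) := by
  classical
  have htwo : ∀ x : ZMod 2, x = 0 ∨ x = 1 := by decide
  have hbb : b + b = 0 := by
    rw [← two_smul (ZMod 2) b, show (2 : ZMod 2) = 0 by decide, zero_smul]
  have hbW : b ∈ W := by
    rw [hW]
    exact Submodule.mem_sup_right (Submodule.mem_span_singleton_self b)
  have hUW : U₀ ≤ W := by rw [hW]; exact le_sup_left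
  have hCW : ∀ s ∈ C, s ∈ W := by
    intro s hs
    rw [hC] at hs
    obtain ⟨u, hu, rfl⟩ := hs
    exact W.add_mem hbW (hUW hu)
  -- part (i)
  have part1 : ∀ S : Finset (Fin (2 * k) → ZMod 2), ↑S ⊆ C → ∑ s ∈ S, s ∈ W := by
    intro S hS
    exact Submodule.sum_mem _ fun s hs => hCW s (hS hs)
  -- part (ii) existence
  have hmemC : ∀ u ∈ U₀, b + u ∈ C := by
    intro u hu; rw [hC]; exact ⟨u, hu, rfl⟩
  have part2 : ∀ w : (Fin (2 * k) → ZMod 2), w ∈ W → ∃ S : Finset (Fin (2 * k) → ZMod 2), ↑S ⊆ C ∧ ∑ s ∈ S, s = w := by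
    intro w hw
    rw [hW, Submodule.mem_sup] at hw
    obtain ⟨y, hy, z, hz, rfl⟩ := hw
    rw [Submodule.mem_span_singleton] at hz
    obtain ⟨c, rfl⟩ := hz
    rcases htwo c with rfl | rfl
    · -- w = y ∈ U₀
      rw [zero_smul, add_zero]
      by_cases hy0 : y = 0
      · exact ⟨∅, by simp, by simp [hy0]⟩
      · refine ⟨{b, b + y}, ?_, ?_⟩
        · intro x hx
          simp only [Finset.coe_insert, Finset.coe_singleton, Set.mem_insert_iff,
            Set.mem_singleton_iff] at hx
          rcases hx with rfl | rfl
          · simpa using hmemC 0 U₀.zero_mem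
          · exact hmemC y hy
        · rw [Finset.sum_pair (by simpa using hy0)]
          rw [← add_assoc, hbb, zero_add]
    · rw [one_smul]
      refine ⟨{y + b}, ?_, by simp⟩
      intro x hx
      simp only [Finset.coe_singleton, Set.mem_singleton_iff] at hx
      subst hx
      rw [add_comm]
      exact hmemC y hy
  -- part (iv): odd sums
  have part4 : ∀ v : (Fin (2 * k) → ZMod 2),
      (∃ S : Finset (Fin (2 * k) → ZMod 2), ↑S ⊆ C ∧ Odd S.card ∧ ∑ s ∈ S, s = v) ↔ v ∈ C := by
    intro v
    constructor
    · rintro ⟨S, hS, hodd, rfl⟩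
      have hsum : ∑ s ∈ S, s = S.card • b + ∑ s ∈ S, (s + b) := by
        rw [Finset.sum_add_distrib, Finset.sum_const]
        have h2 : S.card • b + S.card • b = 0 := by rw [← smul_add, hbb, smul_zero]
        rw [add_comm (∑ s ∈ S, s), ← add_assoc, h2, zero_add]
      have hcard : S.card • b = b := by
        obtain ⟨m, hm⟩ := hodd
        rw [hm, add_nsmul, one_nsmul, mul_smul, two_nsmul, ← smul_add, hbb, smul_zero, zero_add]
      have hu' : ∑ s ∈ S, (s + b) ∈ U₀ := by
        apply Submodule.sum_mem
        intro s hs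
        have := hS hs
        rw [hC] at this
        obtain ⟨u, hu, rfl⟩ := this
        rw [add_comm b u, add_assoc, hbb, add_zero]
        exact hu
      rw [hsum, hcard]
      exact hmemC _ hu'
    · intro hv
      refine ⟨{v}, ?_, by simp, by simp⟩
      simpa using hv
  -- Now the fiber counting.
  haveI : DecidablePred (· ∈ C) := fun _ => Classical.propDecidable _
  haveI : Fintype ↥C := Subtype.fintype _
  -- the linear map
  set L : (↥C → ZMod 2) →ₗ[ZMod 2] (Fin (2 * k) → ZMod 2) :=
    { toFun := fun g => ∑ c : ↥C, g c • (c : (Fin (2 * k) → ZMod 2))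
      map_add' := by intros; simp [add_smul, Finset.sum_add_distrib]
      map_smul' := by intros; simp [mul_smul, Finset.smul_sum] } with hL
  have hLapply : ∀ g : ↥C → ZMod 2, L g = ∑ c : ↥C, g c • (c : (Fin (2 * k) → ZMod 2)) := fun g => rfl
  have hLind : ∀ T : Finset ↥C,
      L (fun c => if c ∈ T then (1 : ZMod 2) else 0) = ∑ c ∈ T, (c : (Fin (2 * k) → ZMod 2)) := by
    intro T
    rw [hLapply]
    have : ∀ c : ↥C, (if c ∈ T then (1 : ZMod 2) else 0) • (c : (Fin (2 * k) → ZMod 2))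
        = if c ∈ T then (c : (Fin (2 * k) → ZMod 2)) else 0 := by
      intro c; split_ifs <;> simp
    rw [Finset.sum_congr rfl fun c _ => this c, Finset.sum_ite_mem, Finset.univ_inter]
  have hsum_subtype : ∀ S : Finset (Fin (2 * k) → ZMod 2), ↑S ⊆ C →
      ∑ c ∈ S.subtype (· ∈ C), (c : (Fin (2 * k) → ZMod 2)) = ∑ s ∈ S, s := by
    intro S hS
    have h1 : ∑ c ∈ S.subtype (· ∈ C), (c : (Fin (2 * k) → ZMod 2))
        = ∑ x ∈ (S.subtype (· ∈ C)).map (Function.Embedding.subtype _), x := by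
      rw [Finset.sum_map]; rfl
    rw [h1, Finset.subtype_map, Finset.filter_true_of_mem fun x hx => hS hx]
  have hind : ∀ g : ↥C → ZMod 2,
      (fun c => if c ∈ Finset.univ.filter (fun c => g c = 1) then (1 : ZMod 2) else 0) = g := by
    intro g
    funext c
    simp only [Finset.mem_filter, Finset.mem_univ, true_and]
    rcases htwo (g c) with h | h <;> simp [h]
  have part3 : ∀ w : (Fin (2 * k) → ZMod 2), w ∈ W →
      Nat.card {S : Finset (Fin (2 * k) → ZMod 2) // ↑S ⊆ C ∧ ∑ s ∈ S, s = w} = 2 ^ (2 ^ k - k - 1) := by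
    intro w hw
    -- equivalences
    have E1 : {S : Finset (Fin (2 * k) → ZMod 2) // ↑S ⊆ C ∧ ∑ s ∈ S, s = w}
        ≃ {T : Finset ↥C // ∑ c ∈ T, (c : (Fin (2 * k) → ZMod 2)) = w} :=
      { toFun := fun Sp => ⟨Sp.1.subtype (· ∈ C), by
          rw [hsum_subtype Sp.1 Sp.2.1]; exact Sp.2.2⟩
        invFun := fun Tp => ⟨Tp.1.map (Function.Embedding.subtype _), by
          constructor
          · intro x hx
            rw [Finset.coe_map] at hx
            obtain ⟨c, _, rfl⟩ := hx
            exact c.2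
          · rw [Finset.sum_map]
            exact Tp.2⟩
        left_inv := fun Sp => by
          ext1
          dsimp only
          rw [Finset.subtype_map, Finset.filter_true_of_mem fun x hx => Sp.2.1 hx]
        right_inv := fun Tp => by
          ext1
          dsimp only
          ext c
          simp only [Finset.mem_subtype, Finset.mem_map, Function.Embedding.coe_subtype]
          constructor
          · rintro ⟨a, ha, hac⟩
            rwa [← Subtype.ext hac]
          · intro h; exact ⟨c, h, rfl⟩ }
    have E2 : {T : Finset ↥C // ∑ c ∈ T, (c : (Fin (2 * k) → ZMod 2)) = w} ≃ {g : ↥C → ZMod 2 // L g = w} :=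
      { toFun := fun Tp => ⟨fun c => if c ∈ Tp.1 then 1 else 0, by
          rw [hLind]; exact Tp.2⟩
        invFun := fun gp => ⟨Finset.univ.filter (fun c => gp.1 c = 1), by
          rw [← hLind, hind gp.1]; exact gp.2⟩
        left_inv := fun Tp => by
          ext1
          dsimp only
          ext c
          simp only [Finset.mem_filter, Finset.mem_univ, true_and]
          split_ifs with h <;> simp [h]
        right_inv := fun gp => by
          ext1
          exact hind gp.1 }
    -- the restricted map
    have hrange : LinearMap.range L = W := by
      apply le_antisymm
      · rintro _ ⟨g, rfl⟩
        exact Submodule.sum_mem _ fun c _ => W.smul_mem _ (hCW c c.2)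
      · intro x hx
        obtain ⟨S, hS, hsum⟩ := part2 x hx
        refine ⟨fun c => if c ∈ S.subtype (· ∈ C) then 1 else 0, ?_⟩
        rw [hLind, hsum_subtype S hS, hsum]
    set L' : (↥C → ZMod 2) →ₗ[ZMod 2] W :=
      L.codRestrict W (fun g => hrange ▸ LinearMap.mem_range_self L g) with hL'
    have hLsurj : Function.Surjective L' := by
      rintro ⟨x, hx⟩
      have : x ∈ LinearMap.range L := hrange.symm ▸ hx
      obtain ⟨g, hg⟩ := this
      exact ⟨g, Subtype.ext hg⟩
    have E3 : {g : ↥C → ZMod 2 // L g = w} ≃ {g : ↥C → ZMod 2 // L' g = ⟨w, hw⟩} :=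
      Equiv.subtypeEquivRight fun g => by
        rw [Subtype.ext_iff]; rfl
    have key := fiber_card_aux L' hLsurj ⟨w, hw⟩
    -- cardinalities
    have hcardU : Nat.card ↥U₀ = 2 ^ k := by
      rw [Nat.card_eq_fintype_card, Module.card_eq_pow_finrank (K := ZMod 2), ZMod.card, hU₀]
    have hcardC : Nat.card ↥C = 2 ^ k := by
      have e : ↥U₀ ≃ ↥C :=
        { toFun := fun u => ⟨b + u, hmemC u u.2⟩
          invFun := fun c => ⟨b + c, by
            obtain ⟨u, hu, hcu⟩ := (hC ▸ c.2 : ∃ u ∈ U₀, (c : (Fin (2 * k) → ZMod 2)) = b + u)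
            rw [hcu, ← add_assoc, hbb, zero_add]; exact hu⟩
          left_inv := fun u => by ext; simp only; rw [← add_assoc, hbb, zero_add]
          right_inv := fun c => by ext; simp only; rw [← add_assoc, hbb, zero_add] }
      rw [← Nat.card_congr e, hcardU]
    have hcardD : Nat.card (↥C → ZMod 2) = 2 ^ 2 ^ k := by
      rw [Nat.card_fun, hcardC, Nat.card_eq_fintype_card, ZMod.card]
    have hb0 : b ≠ 0 := fun h => hb (h ▸ U₀.zero_mem)
    have hinf : U₀ ⊓ Submodule.span (ZMod 2) {b} = ⊥ := by
      rw [eq_bot_iff]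
      intro x hx
      rw [Submodule.mem_inf] at hx
      obtain ⟨hx1, hx2⟩ := hx
      rw [Submodule.mem_span_singleton] at hx2
      obtain ⟨c, rfl⟩ := hx2
      rcases htwo c with rfl | rfl
      · simp
      · rw [one_smul] at hx1; exact absurd hx1 hb
    have hrankW : Module.finrank (ZMod 2) W = k + 1 := by
      have h1 := Submodule.finrank_sup_add_finrank_inf_eq U₀ (Submodule.span (ZMod 2) {b})
      rw [hinf, finrank_bot, add_zero, hU₀, finrank_span_singleton hb0] at h1
      rw [hW, h1]
    have hcardW : Nat.card ↥W = 2 ^ (k + 1) := by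
      rw [Nat.card_eq_fintype_card, Module.card_eq_pow_finrank (K := ZMod 2), ZMod.card,
        hrankW]
    rw [hcardD, hcardW] at key
    have hkk : k + 1 ≤ 2 ^ k := Nat.lt_two_pow_self (n := k)
    have hsplit : (2 : ℕ) ^ 2 ^ k = 2 ^ (2 ^ k - k - 1) * 2 ^ (k + 1) := by
      rw [← pow_add]
      congr 1
      omega
    rw [hsplit] at key
    have hfin : Nat.card {S : Finset (Fin (2 * k) → ZMod 2) // ↑S ⊆ C ∧ ∑ s ∈ S, s = w}
        = Nat.card {g : ↥C → ZMod 2 // L' g = ⟨w, hw⟩} :=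
      Nat.card_congr ((E1.trans E2).trans E3)
    rw [hfin]
    exact Nat.eq_of_mul_eq_mul_right (by positivity) key
  exact ⟨part1, part2, part3, part4⟩
end
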